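/- Let A be a local commutative ring and ϖ ∈ A a non-zero-divisor lying in the Jacobson radical of A (ϖ-adically Zariskian). Then the following are equivalent: (1) for every f ∈ A and every n ≥ 1, either ϖ^n ∈ (f)A or f ∈ (ϖ^n)A; (2) the quotient A / (⋂_{n≥1} ϖ^n A) is a valuation ring. -/

import Mathlib

section Aux

variable {A : Type*} [CommRing A]

private lemma nzd_of_dvd_nzd {ϖ u : A} (hϖ : ϖ ∈ nonZeroDivisors A) (h : u ∣ ϖ) :
    u ∈ nonZeroDivisors A := by
  obtain ⟨a, rfl⟩ := h
  exact (mul_mem_nonZeroDivisors.mp hϖ).1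

/-- Key comparability lemma: two elements not divisible by `ϖ` are comparable. -/
private lemma key_compare {ϖ : A} (hϖ : ϖ ∈ nonZeroDivisors A)
    (H : ∀ (f : A) (n : ℕ), 1 ≤ n → ϖ ^ n ∈ Ideal.span {f} ∨ f ∈ Ideal.span {ϖ ^ n})
    {u v : A} (hu : ¬ ϖ ∣ u) (hv : ¬ ϖ ∣ v) : u ∣ v ∨ v ∣ u := by
  have h1 : u ∣ ϖ := by
    rcases H u 1 le_rfl with h | h
    · simpa [Ideal.mem_span_singleton] using h
    · rw [Ideal.mem_span_singleton, pow_one] at h; exact absurd h hu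
  have h2 : v ∣ ϖ := by
    rcases H v 1 le_rfl with h | h
    · simpa [Ideal.mem_span_singleton] using h
    · rw [Ideal.mem_span_singleton, pow_one] at h; exact absurd h hv
  obtain ⟨a, ha⟩ := h1
  obtain ⟨b, hb⟩ := h2
  have hund : u ∈ nonZeroDivisors A := nzd_of_dvd_nzd hϖ ⟨a, ha⟩
  have hand : a ∈ nonZeroDivisors A := nzd_of_dvd_nzd hϖ ⟨u, by rw [ha, mul_comm]⟩
  have hbnd : b ∈ nonZeroDivisors A := nzd_of_dvd_nzd hϖ ⟨v, by rw [hb, mul_comm]⟩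
  rcases H (u * b) 1 le_rfl with h | h
  · -- u * b ∣ ϖ
    rw [Ideal.mem_span_singleton, pow_one] at h
    obtain ⟨d, hd⟩ := h
    -- ϖ = u*b*d, and ϖ = u*a, so a = b*d
    have hab : a = b * d := by
      have : u * a = u * (b * d) := by rw [← ha, hd]; ring
      exact (mul_cancel_left_mem_nonZeroDivisors hund).mp this
    -- v * b = u * a = u * b * d, cancel b: v = u * d
    left
    refine ⟨d, ?_⟩
    have : v * b = u * d * b := by
      rw [← hb, ha, hab]; ring
    exact (mul_cancel_right_mem_nonZeroDivisors hbnd).mp this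
  · -- u * b ∈ (ϖ)
    rw [Ideal.mem_span_singleton, pow_one] at h
    obtain ⟨c, hc⟩ := h
    -- u*b = ϖ*c = u*a*c, cancel u: b = a*c
    have hba : b = a * c := by
      have : u * b = u * (a * c) := by rw [hc, ha]; ring
      exact (mul_cancel_left_mem_nonZeroDivisors hund).mp this
    -- u*a = v*b = v*a*c, cancel a: u = v*c
    right
    refine ⟨c, ?_⟩
    have : u * a = v * c * a := by rw [← ha, hb, hba]; ring
    exact (mul_cancel_right_mem_nonZeroDivisors hand).mp this

/-- Strip off the maximal power of `ϖ` from an element not divisible by `ϖ ^ N`. -/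
private lemma strip {ϖ : A} :
    ∀ (N : ℕ) (x : A), ¬ ϖ ^ N ∣ x → ∃ n u, x = ϖ ^ n * u ∧ ¬ ϖ ∣ u := by
  intro N
  induction N with
  | zero => intro x hx; exact absurd (by simpa using (one_dvd x)) hx
  | succ N ih =>
    intro x hx
    by_cases h : ϖ ∣ x
    · obtain ⟨x', rfl⟩ := h
      have hx' : ¬ ϖ ^ N ∣ x' := by
        rintro ⟨d, hd⟩
        exact hx ⟨d, by rw [hd, pow_succ]; ring⟩
      obtain ⟨n, u, hxu, hu⟩ := ih x' hx'
      exact ⟨n + 1, u, by rw [hxu, pow_succ]; ring, hu⟩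
    · exact ⟨0, x, by simp, h⟩

/-- Comparability of stripped elements. -/
private lemma compare_strip {ϖ : A} (hϖ : ϖ ∈ nonZeroDivisors A)
    (H : ∀ (f : A) (n : ℕ), 1 ≤ n → ϖ ^ n ∈ Ideal.span {f} ∨ f ∈ Ideal.span {ϖ ^ n})
    {n m : ℕ} (hnm : n ≤ m) {u v : A} (hu : ¬ ϖ ∣ u) (hv : ¬ ϖ ∣ v) :
    ϖ ^ n * u ∣ ϖ ^ m * v ∨ ϖ ^ m * v ∣ ϖ ^ n * u := by
  have hm : ϖ ^ m = ϖ ^ n * ϖ ^ (m - n) := by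
    rw [← pow_add, Nat.add_sub_cancel' hnm]
  rcases key_compare hϖ H hu hv with ⟨c, hc⟩ | ⟨c, hc⟩
  · -- v = u * c
    exact Or.inl ⟨ϖ ^ (m - n) * c, by rw [hm, hc]; ring⟩
  · -- u = v * c
    rcases Nat.eq_or_lt_of_le hnm with rfl | hlt
    · exact Or.inr ⟨c, by rw [hc]; ring⟩
    · have h1 : 1 ≤ m - n := by omega
      rcases H c (m - n) h1 with h | h
      · -- c ∣ ϖ^(m-n)
        rw [Ideal.mem_span_singleton] at h
        obtain ⟨e, he⟩ := h
        exact Or.inl ⟨e, by rw [hm, he, hc]; ring⟩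
      · -- ϖ^(m-n) ∣ c
        rw [Ideal.mem_span_singleton] at h
        obtain ⟨d, hd⟩ := h
        exact Or.inr ⟨d, by rw [hc, hd, hm]; ring⟩

end Aux

/-- Let `A` be a local ring and `ϖ ∈ A` a non-zero-divisor lying in the Jacobson radical.
Then the following are equivalent: (1) for every `f ∈ A` and `n ≥ 1`, either
`ϖ^n ∈ (f)` or `f ∈ (ϖ^n)`; (2) the separated quotient `A / ⋂_{n≥1} ϖ^n A` is a
valuation ring (in particular an integral domain). -/
theorem local_piValuative_iff_quotient_valuationRing {A : Type*} [CommRing A]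
    [IsLocalRing A] (ϖ : A) (hϖ : ϖ ∈ nonZeroDivisors A)
    (hjac : ϖ ∈ (⊥ : Ideal A).jacobson) :
    (∀ (f : A) (n : ℕ), 1 ≤ n → ϖ ^ n ∈ Ideal.span {f} ∨ f ∈ Ideal.span {ϖ ^ n}) ↔
      ∃ hd : IsDomain (A ⧸ (⨅ (n : ℕ) (_ : 1 ≤ n), Ideal.span {ϖ ^ n})),
        @ValuationRing (A ⧸ (⨅ (n : ℕ) (_ : 1 ≤ n), Ideal.span {ϖ ^ n})) _ hd := by
  set I : Ideal A := ⨅ (n : ℕ) (_ : 1 ≤ n), Ideal.span {ϖ ^ n} with hI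
  have hImem : ∀ z : A, z ∈ I ↔ ∀ n : ℕ, 1 ≤ n → ϖ ^ n ∣ z := by
    intro z
    simp [hI, Ideal.mem_iInf, Ideal.mem_span_singleton]
  constructor
  · intro H
    -- ϖ is not a unit
    have hϖnu : ¬ IsUnit ϖ := by
      intro hun
      obtain ⟨w, hw⟩ := hun
      have := Ideal.mem_jacobson_bot.mp hjac (-(↑w⁻¹))
      rw [show ϖ * (-(↑w⁻¹ : Aˣ)) + 1 = -(ϖ * ↑w⁻¹) + 1 by ring] at this
      rw [show (ϖ : A) * ↑w⁻¹ = 1 by rw [← hw]; exact w.mul_inv] at this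
      simp at this
    -- I is a prime ideal
    have hprime : I.IsPrime := by
      constructor
      · intro htop
        have h1 : (1 : A) ∈ I := htop ▸ Submodule.mem_top
        obtain ⟨t, ht⟩ := (hImem 1).mp h1 1 le_rfl
        exact hϖnu (IsUnit.of_mul_eq_one (a := ϖ) t (by rw [← pow_one ϖ, ← ht]))
      · intro x y hxy
        by_cases hx : x ∈ I
        · exact Or.inl hx
        · refine Or.inr ((hImem y).mpr fun k hk => ?_)
          obtain ⟨N, hN1, hNx⟩ : ∃ N, 1 ≤ N ∧ ¬ ϖ ^ N ∣ x := by
            by_contra hcon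
            push_neg at hcon
            exact hx ((hImem x).mpr hcon)
          have hxdvd : x ∣ ϖ ^ N := by
            rcases H x N hN1 with h | h
            · exact (Ideal.mem_span_singleton).mp h
            · exact absurd ((Ideal.mem_span_singleton).mp h) hNx
          obtain ⟨c, hc⟩ := hxdvd
          obtain ⟨d, hd⟩ := (hImem (x * y)).mp hxy (N + k) (by omega)
          -- ϖ^N * y = x*c*y = c*(x*y) = c * ϖ^(N+k) * d
          have hNk : ϖ ^ (N + k) = ϖ ^ N * ϖ ^ k := pow_add ϖ N k
          have : ϖ ^ N * y = ϖ ^ N * (ϖ ^ k * (c * d)) := by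
            linear_combination y * hc + c * hd + c * d * hNk
          exact ⟨c * d, (mul_cancel_left_mem_nonZeroDivisors
            (pow_mem hϖ N)).mp this⟩
    haveI := hprime
    refine ⟨Ideal.Quotient.isDomain I, @ValuationRing.mk _ _ _ ⟨fun a b => ?_⟩⟩
    obtain ⟨x, rfl⟩ := Ideal.Quotient.mk_surjective a
    obtain ⟨y, rfl⟩ := Ideal.Quotient.mk_surjective b
    by_cases hx : x ∈ I
    · exact ⟨0, Or.inr (by rw [mul_zero, eq_comm, Ideal.Quotient.eq_zero_iff_mem]; exact hx)⟩
    by_cases hy : y ∈ I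
    · exact ⟨0, Or.inl (by rw [mul_zero, eq_comm, Ideal.Quotient.eq_zero_iff_mem]; exact hy)⟩
    -- both nonzero: strip powers of ϖ
    obtain ⟨N, _, hNx⟩ : ∃ N, 1 ≤ N ∧ ¬ ϖ ^ N ∣ x := by
      by_contra hcon; push_neg at hcon; exact hx ((hImem x).mpr hcon)
    obtain ⟨M, _, hMy⟩ : ∃ M, 1 ≤ M ∧ ¬ ϖ ^ M ∣ y := by
      by_contra hcon; push_neg at hcon; exact hy ((hImem y).mpr hcon)
    obtain ⟨n, u, rfl, hu⟩ := strip N x hNx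
    obtain ⟨m, v, rfl, hv⟩ := strip M y hMy
    have hdvd : ϖ ^ n * u ∣ ϖ ^ m * v ∨ ϖ ^ m * v ∣ ϖ ^ n * u := by
      rcases le_total n m with hnm | hmn
      · exact compare_strip hϖ H hnm hu hv
      · exact (compare_strip hϖ H hmn hv hu).symm
    rcases hdvd with ⟨c, hc⟩ | ⟨c, hc⟩
    · exact ⟨Ideal.Quotient.mk I c, Or.inl (by rw [← map_mul, ← hc])⟩
    · exact ⟨Ideal.Quotient.mk I c, Or.inr (by rw [← map_mul, ← hc])⟩
  · rintro ⟨hd, hv⟩ f n hn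
    obtain ⟨c, hc | hc⟩ := @ValuationRing.cond _ _ (@ValuationRing.toPreValuationRing _ _ hd hv)
      (Ideal.Quotient.mk I f) (Ideal.Quotient.mk I (ϖ ^ n))
    · -- f * c = ϖ^n in the quotient
      obtain ⟨g, rfl⟩ := Ideal.Quotient.mk_surjective c
      rw [← map_mul, Ideal.Quotient.eq] at hc
      obtain ⟨t, ht⟩ := (hImem _).mp hc (n + 1) (by omega)
      -- f*g - ϖ^n = ϖ^(n+1) * t, so f*g = ϖ^n * (1 + ϖ*t)
      have hfg : f * g = ϖ ^ n * (ϖ * t + 1) := by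
        have : f * g - ϖ ^ n = ϖ ^ (n + 1) * t := ht
        rw [pow_succ] at this
        linear_combination this
      have hunit : IsUnit (ϖ * t + 1) := Ideal.mem_jacobson_bot.mp hjac t
      obtain ⟨w, hw⟩ := hunit
      left
      rw [Ideal.mem_span_singleton]
      refine ⟨g * ↑w⁻¹, ?_⟩
      have : f * g * ↑w⁻¹ = ϖ ^ n * (↑w * ↑w⁻¹) := by rw [hfg, hw]; ring
      rw [w.mul_inv, mul_one] at this
      rw [← this]; ring
    · -- ϖ^n * c = f in the quotient
      obtain ⟨g, rfl⟩ := Ideal.Quotient.mk_surjective c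
      rw [← map_mul, Ideal.Quotient.eq] at hc
      obtain ⟨t, ht⟩ := (hImem _).mp hc n hn
      right
      rw [Ideal.mem_span_singleton]
      exact ⟨g - t, by linear_combination -ht⟩
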